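/- The function h(z) = (1/(4z))·ln((1+z)/(1-z))·(1 - z²) on (0,1) is strictly decreasing, with h(z) → 1/2 as z → 0⁺ and h(z) → 0 as z → 1⁻. Consequently, for each t ∈ (0, 1/2) the equation h(z) = t has a unique solution z(t) ∈ (0,1), and z(t) is strictly decreasing in t. -/

import Mathlib

open Set Filter

private lemma hdL {x : ℝ} (h1 : (1:ℝ) + x ≠ 0) (h2 : (1:ℝ) - x ≠ 0) :
    HasDerivAt (fun z : ℝ => Real.log (1 + z) - Real.log (1 - z))
      (1/(1+x) + 1/(1-x)) x := by
  have hA : HasDerivAt (fun z : ℝ => Real.log (1 + z)) (1/(1+x)) x := by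
    have := (Real.hasDerivAt_log h1).comp x ((hasDerivAt_const x (1:ℝ)).add (hasDerivAt_id x))
    simpa [one_div, Function.comp_def] using this
  have hB : HasDerivAt (fun z : ℝ => Real.log (1 - z)) (-(1/(1-x))) x := by
    have := (Real.hasDerivAt_log h2).comp x ((hasDerivAt_const x (1:ℝ)).sub (hasDerivAt_id x))
    simpa [one_div, Function.comp_def] using this
  simpa [sub_neg_eq_add, Pi.sub_def] using hA.sub hB

private lemma key_ineq {x : ℝ} (hx : x ∈ Ioo (0:ℝ) 1) :
    2 * x < Real.log (1 + x) - Real.log (1 - x) := by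
  obtain ⟨hx0, hx1⟩ := hx
  set g : ℝ → ℝ := fun z => Real.log (1 + z) - Real.log (1 - z) - 2 * z with hg
  have hmono : StrictMonoOn g (Ico (0:ℝ) 1) := by
    apply strictMonoOn_of_deriv_pos (convex_Ico 0 1)
    · apply ContinuousOn.sub _ (continuousOn_const.mul continuousOn_id)
      apply ContinuousOn.sub
      · exact ContinuousOn.log (by fun_prop) (fun z hz => by nlinarith [hz.1, hz.2])
      · exact ContinuousOn.log (by fun_prop) (fun z hz => by nlinarith [hz.1, hz.2])
    · intro z hz
      rw [interior_Ico] at hz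
      obtain ⟨hz0, hz1⟩ := hz
      have h1 : (1:ℝ) + z ≠ 0 := by nlinarith
      have h2 : (1:ℝ) - z ≠ 0 := by nlinarith
      have : HasDerivAt g (1/(1+z) + 1/(1-z) - 2) z := (hdL h1 h2).sub (by
        simpa using (hasDerivAt_id z).const_mul (2:ℝ))
      rw [this.deriv]
      have heq : 1/(1+z) + 1/(1-z) = 2/(1-z^2) := by
        rw [div_add_div _ _ h1 h2]; congr 1 <;> ring
      rw [heq]
      have : (2:ℝ) < 2/(1-z^2) := by
        rw [lt_div_iff₀ (by nlinarith)]; nlinarith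
      linarith
  have := hmono (left_mem_Ico.2 one_pos) ⟨le_of_lt hx0, hx1⟩ hx0
  simp [hg] at this
  linarith

private lemma hasDerivAt_hfun (h : ℝ → ℝ)
    (hh : ∀ z : ℝ, h z = (1 - z ^ 2) * Real.log ((1 + z) / (1 - z)) / (4 * z))
    {x : ℝ} (hx : x ∈ Ioo (0:ℝ) 1) :
    HasDerivAt h
      ((2*x - (1+x^2) * (Real.log (1+x) - Real.log (1-x))) / (4*x^2)) x := by
  obtain ⟨hx0, hx1⟩ := hx
  have h1 : (1:ℝ) + x ≠ 0 := by nlinarith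
  have h2 : (1:ℝ) - x ≠ 0 := by nlinarith
  have hx0' : x ≠ 0 := ne_of_gt hx0
  set L : ℝ := Real.log (1+x) - Real.log (1-x) with hL
  have hN : HasDerivAt (fun z : ℝ => (1 - z^2) * (Real.log (1+z) - Real.log (1-z)))
      ((-(2*x)) * L + (1 - x^2) * (1/(1+x) + 1/(1-x))) x := by
    have hq : HasDerivAt (fun z : ℝ => 1 - z^2) (-(2*x)) x := by
      simpa using (hasDerivAt_pow 2 x).const_sub 1
    exact hq.mul (hdL h1 h2)
  have hD : HasDerivAt (fun z : ℝ => 4*z) 4 x := by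
    simpa using (hasDerivAt_id x).const_mul (4:ℝ)
  have hf : HasDerivAt (fun z : ℝ => (1 - z^2) * (Real.log (1+z) - Real.log (1-z)) / (4*z))
      ((((-(2*x)) * L + (1 - x^2) * (1/(1+x) + 1/(1-x))) * (4*x)
        - (1 - x^2) * L * 4) / (4*x)^2) x :=
    hN.div hD (by simpa using hx0')
  have heq : (fun z : ℝ => h z) =ᶠ[nhds x]
      (fun z : ℝ => (1 - z^2) * (Real.log (1+z) - Real.log (1-z)) / (4*z)) := by
    filter_upwards [isOpen_Ioo.mem_nhds (show x ∈ Ioo (-1:ℝ) 1 by constructor <;> nlinarith)]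
      with z hz
    have hz1 : (1:ℝ) + z ≠ 0 := by nlinarith [hz.1, hz.2]
    have hz2 : (1:ℝ) - z ≠ 0 := by nlinarith [hz.1, hz.2]
    rw [hh z, Real.log_div hz1 hz2]
  have := hf.congr_of_eventuallyEq heq
  refine this.congr_deriv ?_
  field_simp
  ring

theorem h_function_properties
    (h : ℝ → ℝ)
    (hh : ∀ z : ℝ, h z = (1 - z ^ 2) * Real.log ((1 + z) / (1 - z)) / (4 * z)) :
    StrictAntiOn h (Ioo (0 : ℝ) 1) ∧
    Tendsto h (nhdsWithin 0 (Ioi 0)) (nhds (1 / 2)) ∧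
    Tendsto h (nhdsWithin 1 (Iio 1)) (nhds 0) ∧
    (∀ t ∈ Ioo (0 : ℝ) (1 / 2), ∃! z : ℝ, z ∈ Ioo (0 : ℝ) 1 ∧ h z = t) ∧
    (∀ t₁ t₂ z₁ z₂ : ℝ, t₁ ∈ Ioo (0 : ℝ) (1 / 2) → t₂ ∈ Ioo (0 : ℝ) (1 / 2) →
      t₁ < t₂ → z₁ ∈ Ioo (0 : ℝ) 1 → z₂ ∈ Ioo (0 : ℝ) 1 →
      h z₁ = t₁ → h z₂ = t₂ → z₂ < z₁) := by
  have hcont : ContinuousOn h (Ioo (0:ℝ) 1) := by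
    have : ContinuousOn (fun z : ℝ => (1 - z ^ 2) * Real.log ((1 + z) / (1 - z)) / (4 * z))
        (Ioo (0:ℝ) 1) := by
      apply ContinuousOn.div
      · apply ContinuousOn.mul (by fun_prop)
        apply ContinuousOn.log
        · exact ContinuousOn.div (by fun_prop) (by fun_prop)
            (fun z hz => by nlinarith [hz.1, hz.2])
        · intro z hz
          exact div_ne_zero (by nlinarith [hz.1, hz.2]) (by nlinarith [hz.1, hz.2])
      · fun_prop
      · intro z hz; nlinarith [hz.1, hz.2]
    exact this.congr (fun z _ => hh z)
  have hanti : StrictAntiOn h (Ioo (0:ℝ) 1) := by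
    apply strictAntiOn_of_deriv_neg (convex_Ioo 0 1) hcont
    intro x hx
    rw [interior_Ioo] at hx
    rw [(hasDerivAt_hfun h hh hx).deriv]
    apply div_neg_of_neg_of_pos
    · nlinarith [key_ineq hx, hx.1, hx.2, sq_nonneg x]
    · nlinarith [hx.1]
  have htend0 : Tendsto h (nhdsWithin 0 (Ioi 0)) (nhds (1 / 2)) := by
    have hd := hdL (by norm_num : (1:ℝ) + 0 ≠ 0) (by norm_num : (1:ℝ) - 0 ≠ 0)
    rw [hasDerivAt_iff_tendsto_slope] at hd
    have hslope : Tendsto (slope (fun z : ℝ => Real.log (1+z) - Real.log (1-z)) 0)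
        (nhdsWithin 0 (Ioi 0)) (nhds (1/(1+(0:ℝ)) + 1/(1-(0:ℝ)))) :=
      hd.mono_left (nhdsWithin_mono _ (fun y hy => ne_of_gt hy))
    have hpoly : Tendsto (fun z : ℝ => (1 - z^2)/4) (nhdsWithin 0 (Ioi 0))
        (nhds ((1-(0:ℝ)^2)/4)) :=
      ((continuous_const.sub (continuous_pow 2)).div_const 4).continuousAt.continuousWithinAt
    have hmul := hpoly.mul hslope
    have : ((1-(0:ℝ)^2)/4) * (1/(1+(0:ℝ)) + 1/(1-(0:ℝ))) = 1/2 := by norm_num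
    rw [this] at hmul
    refine hmul.congr' ?_
    filter_upwards [Ioo_mem_nhdsGT_of_mem (by norm_num : (0:ℝ) ∈ Ico (0:ℝ) 1)] with z hz
    have hz1 : (1:ℝ) + z ≠ 0 := by nlinarith [hz.1, hz.2]
    have hz2 : (1:ℝ) - z ≠ 0 := by nlinarith [hz.1, hz.2]
    have hz0 : z ≠ 0 := ne_of_gt hz.1
    rw [hh z, Real.log_div hz1 hz2]
    simp only [add_zero, sub_zero, Real.log_one, slope_def_field]
    field_simp
  have htend1 : Tendsto h (nhdsWithin 1 (Iio 1)) (nhds 0) := by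
    have hA : Tendsto (fun z : ℝ => (1+z)/(4*z)) (nhdsWithin 1 (Iio 1)) (nhds ((1+1)/(4*1))) :=
      (ContinuousAt.div (by fun_prop) (by fun_prop) (by norm_num)).continuousWithinAt
    have hB : Tendsto (fun z : ℝ => (1-z) * Real.log (1+z)) (nhdsWithin 1 (Iio 1))
        (nhds ((1-1) * Real.log (1+1))) :=
      (ContinuousAt.mul (by fun_prop) ((Real.continuousAt_log (by norm_num)).comp
        (by fun_prop))).continuousWithinAt
    have hC : Tendsto (fun z : ℝ => (1-z) * Real.log (1-z)) (nhdsWithin 1 (Iio 1))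
        (nhds ((1-(1:ℝ)) * Real.log (1-1))) :=
      (Real.continuous_mul_log.comp
        (continuous_const.sub continuous_id)).continuousAt.continuousWithinAt
    have hmul := hA.mul (hB.sub hC)
    have : ((1+1)/(4*1)) * (((1-1) * Real.log (1+1)) - ((1-(1:ℝ)) * Real.log (1-1))) = 0 := by
      norm_num
    rw [this] at hmul
    refine hmul.congr' ?_
    filter_upwards [Ioo_mem_nhdsLT_of_mem (by norm_num : (1:ℝ) ∈ Ioc (0:ℝ) 1)] with z hz
    have hz1 : (1:ℝ) + z ≠ 0 := by nlinarith [hz.1, hz.2]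
    have hz2 : (1:ℝ) - z ≠ 0 := by nlinarith [hz.1, hz.2]
    have hz0 : z ≠ 0 := ne_of_gt hz.1
    rw [hh z, Real.log_div hz1 hz2]
    field_simp
    ring
  refine ⟨hanti, htend0, htend1, ?_, ?_⟩
  · intro t ht
    obtain ⟨ht0, ht2⟩ := ht
    -- find a near 0 with h a > t
    have e1 : ∀ᶠ z in nhdsWithin (0:ℝ) (Ioi 0), t < h z :=
      htend0.eventually (eventually_gt_nhds ht2)
    have e1' : ∀ᶠ z in nhdsWithin (0:ℝ) (Ioi 0), t < h z ∧ z ∈ Ioo (0:ℝ) 2⁻¹ :=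
      e1.and (eventually_of_mem
        (Ioo_mem_nhdsGT_of_mem (by norm_num : (0:ℝ) ∈ Ico (0:ℝ) 2⁻¹)) (fun z hz => hz))
    obtain ⟨a, hta, ha0, ha2⟩ : ∃ a : ℝ, t < h a ∧ 0 < a ∧ a < 2⁻¹ := by
      obtain ⟨a, h1, h2⟩ := e1'.exists
      exact ⟨a, h1, h2.1, h2.2⟩
    have e2 : ∀ᶠ z in nhdsWithin (1:ℝ) (Iio 1), h z < t :=
      htend1.eventually (eventually_lt_nhds ht0)
    have e2' : ∀ᶠ z in nhdsWithin (1:ℝ) (Iio 1), h z < t ∧ z ∈ Ioo (2⁻¹:ℝ) 1 :=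
      e2.and (eventually_of_mem
        (Ioo_mem_nhdsLT_of_mem (by norm_num : (1:ℝ) ∈ Ioc (2⁻¹:ℝ) 1)) (fun z hz => hz))
    obtain ⟨b, htb, hb2, hb1⟩ : ∃ b : ℝ, h b < t ∧ 2⁻¹ < b ∧ b < 1 := by
      obtain ⟨b, h1, h2⟩ := e2'.exists
      exact ⟨b, h1, h2.1, h2.2⟩
    have hab : a < b := lt_trans ha2 hb2
    have hsub : Icc a b ⊆ Ioo (0:ℝ) 1 := fun z hz => ⟨lt_of_lt_of_le ha0 hz.1,
      lt_of_le_of_lt hz.2 hb1⟩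
    have hivt := intermediate_value_Icc' (le_of_lt hab) (hcont.mono hsub)
    have htmem : t ∈ Icc (h b) (h a) := ⟨le_of_lt htb, le_of_lt hta⟩
    obtain ⟨z, hzmem, hzt⟩ := hivt htmem
    have hzI : z ∈ Ioo (0:ℝ) 1 := hsub hzmem
    refine ⟨z, ⟨hzI, hzt⟩, ?_⟩
    intro y hy
    exact hanti.injOn hy.1 hzI (by rw [hy.2, hzt])
  · intro t₁ t₂ z₁ z₂ ht₁ ht₂ hlt hz₁ hz₂ he₁ he₂
    rcases lt_trichotomy z₂ z₁ with hc | hc | hc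
    · exact hc
    · exfalso; rw [hc, he₁] at he₂; linarith
    · exfalso
      have := hanti hz₁ hz₂ hc
      rw [he₁, he₂] at this
      linarith
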